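/- For every f in the Schwartz space on ℝ, the function α ↦ sup_{β ≠ α} |(f(α) − f(β))/(α − β)| belongs to L²(ℝ) with norm bounded by a universal constant times ‖f'‖_{L²}. -/

import Mathlib

open MeasureTheory

section MaximalFunction

open Set ENNReal

noncomputable def mxF (u : ℝ → ℝ≥0∞) (α : ℝ) : ℝ≥0∞ :=
  ⨆ (p : ℝ × ℝ) (_ : p.1 < α ∧ α < p.2),
    (∫⁻ x in Set.Ioo p.1 p.2, u x) / ENNReal.ofReal (p.2 - p.1)

lemma avg_le_mxF (u : ℝ → ℝ≥0∞) {α : ℝ} {p : ℝ × ℝ} (h : p.1 < α ∧ α < p.2) :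
    (∫⁻ x in Set.Ioo p.1 p.2, u x) / ENNReal.ofReal (p.2 - p.1) ≤ mxF u α :=
  le_iSup_of_le p (by rw [iSup_pos h])

lemma isOpen_mxF_gt (u : ℝ → ℝ≥0∞) (t : ℝ≥0∞) : IsOpen {α | t < mxF u α} := by
  have : {α | t < mxF u α} = ⋃ (p : ℝ × ℝ) (_ : t < (∫⁻ x in Set.Ioo p.1 p.2, u x) / ENNReal.ofReal (p.2 - p.1)), Set.Ioo p.1 p.2 := by
    ext α
    simp only [Set.mem_setOf_eq, Set.mem_iUnion, mxF, lt_iSup_iff, Set.mem_Ioo]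
    constructor
    · rintro ⟨p, hp, ht⟩; exact ⟨p, ht, hp⟩
    · rintro ⟨p, ht, hp⟩; exact ⟨p, hp, ht⟩
  rw [this]
  exact isOpen_iUnion fun p => isOpen_iUnion fun _ => isOpen_Ioo

lemma measurable_mxF (u : ℝ → ℝ≥0∞) : Measurable (mxF u) :=
  measurable_of_Ioi fun t => (isOpen_mxF_gt u t).measurableSet


/-- Weak type (1,1) bound for the maximal function, constant 4 via Vitali. -/
lemma weak_mxF (u : ℝ → ℝ≥0∞) (hu : ∫⁻ x, u x ≠ ∞) {t : ℝ≥0∞} (ht0 : t ≠ 0) (ht : t ≠ ∞) :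
    t * volume {α | t < mxF u α} ≤ 4 * ∫⁻ x, u x := by
  set I := ∫⁻ x, u x with hI
  set S : Set (ℝ × ℝ) :=
    {p | t < (∫⁻ x in Set.Ioo p.1 p.2, u x) / ENNReal.ofReal (p.2 - p.1)} with hS
  have hpos : ∀ p ∈ S, p.1 < p.2 := by
    intro p hp
    by_contra hle
    push_neg at hle
    have : Set.Ioo p.1 p.2 = ∅ := Set.Ioo_eq_empty (by exact fun h => absurd hle (not_le.2 h))
    rw [hS, Set.mem_setOf_eq, this] at hp
    simp at hp
  have key : ∀ p ∈ S, t * ENNReal.ofReal (p.2 - p.1) ≤ ∫⁻ x in Set.Ioo p.1 p.2, u x := by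
    intro p hp
    by_cases hd : ENNReal.ofReal (p.2 - p.1) = 0
    · simp [hd]
    · exact (ENNReal.le_div_iff_mul_le (Or.inl hd) (Or.inl ENNReal.ofReal_ne_top)).1
        (le_of_lt hp)
  have lenbound : ∀ p ∈ S, (p.2 - p.1) / 2 ≤ (I / t).toReal := by
    intro p hp
    have h1 : t * ENNReal.ofReal (p.2 - p.1) ≤ I :=
      (key p hp).trans (setLIntegral_le_lintegral _ _)
    have h2 : ENNReal.ofReal (p.2 - p.1) ≤ I / t :=
      (ENNReal.le_div_iff_mul_le (Or.inl ht0) (Or.inl ht)).2 (by rwa [mul_comm])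
    have h3 : (ENNReal.ofReal (p.2 - p.1)).toReal ≤ (I / t).toReal :=
      ENNReal.toReal_mono (by simp [ENNReal.div_eq_top, hu, ht0]) h2
    rw [ENNReal.toReal_ofReal (le_of_lt (sub_pos.2 (hpos p hp)))] at h3
    linarith [hpos p hp]
  -- Vitali covering
  obtain ⟨v, vS, vdisj, hcov⟩ :=
    Vitali.exists_disjoint_subfamily_covering_enlargement_closedBall S
      (fun p => (p.1 + p.2) / 2) (fun p => (p.2 - p.1) / 2) ((I / t).toReal)
      lenbound 4 (by norm_num)
  have hball : ∀ p : ℝ × ℝ, Metric.closedBall ((p.1 + p.2) / 2) ((p.2 - p.1) / 2)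
      = Set.Icc p.1 p.2 := by
    intro p
    rw [Real.closedBall_eq_Icc]
    congr 1 <;> ring
  have hvc : v.Countable := by
    apply vdisj.countable_of_nonempty_interior
    intro p hp
    rw [hball, interior_Icc]
    exact ⟨(p.1 + p.2)/2, by constructor <;> [linarith [hpos p (vS hp)]; linarith [hpos p (vS hp)]]⟩
  -- covering of the level set
  have cover : {α | t < mxF u α} ⊆ ⋃ p ∈ v, Metric.closedBall ((p.1 + p.2) / 2) (4 * ((p.2 - p.1) / 2)) := by
    intro α hα
    rw [Set.mem_setOf_eq, mxF, lt_iSup_iff] at hα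
    obtain ⟨p, hp⟩ := hα
    rw [lt_iSup_iff] at hp
    obtain ⟨hmem, hlt⟩ := hp
    have hpS : p ∈ S := hlt
    obtain ⟨b, hbv, hsub⟩ := hcov p hpS
    refine Set.mem_biUnion hbv (hsub ?_)
    rw [hball]
    exact ⟨le_of_lt hmem.1, le_of_lt hmem.2⟩
  calc t * volume {α | t < mxF u α}
      ≤ t * ∑' p : v, volume (Metric.closedBall ((p.1.1 + p.1.2) / 2) (4 * ((p.1.2 - p.1.1) / 2))) := by
        gcongr
        exact (measure_mono cover).trans (measure_biUnion_le _ hvc _)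
    _ = ∑' p : v, t * (4 * ENNReal.ofReal (p.1.2 - p.1.1)) := by
        rw [ENNReal.tsum_mul_left]
        congr 1
        refine tsum_congr fun p => ?_
        rw [Real.volume_closedBall]
        congr 1
        rw [← ENNReal.ofReal_ofNat, ← ENNReal.ofReal_mul (by norm_num)]
        congr 1
        ring
    _ = 4 * ∑' p : v, t * ENNReal.ofReal (p.1.2 - p.1.1) := by
        rw [← ENNReal.tsum_mul_left]
        congr 1; ext p; ring
    _ ≤ 4 * ∑' p : v, ∫⁻ x in Set.Ioo p.1.1 p.1.2, u x := by
        gcongr with p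
        exact key p.1 (vS p.2)
    _ = 4 * ∫⁻ x in ⋃ p ∈ v, Set.Ioo p.1 p.2, u x := by
        congr 1
        rw [lintegral_biUnion hvc (fun p _ => measurableSet_Ioo)]
        intro p hp q hq hpq
        have hsubset : ∀ p : ℝ × ℝ, Set.Ioo p.1 p.2 ⊆
            Metric.closedBall ((p.1 + p.2) / 2) ((p.2 - p.1) / 2) := fun p => by
          rw [hball]; exact Set.Ioo_subset_Icc_self
        exact (vdisj hp hq hpq).mono (hsubset p) (hsubset q)
    _ ≤ 4 * I := by gcongr; exact setLIntegral_le_lintegral _ _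

/-- Truncated weak-type bound. -/
lemma trunc_mxF (u : ℝ → ℝ≥0∞) {t : ℝ≥0∞} (ht0 : t ≠ 0) (ht : t ≠ ∞)
    (hu : ∫⁻ x, ({x | t / 2 < u x}.indicator u) x ≠ ∞) :
    t * volume {α | t < mxF u α} ≤ 8 * ∫⁻ x, ({x | t / 2 < u x}.indicator u) x := by
  set w := {x | t / 2 < u x}.indicator u with hw
  have hle : ∀ x, u x ≤ w x + t / 2 := by
    intro x
    by_cases hx : t / 2 < u x
    · rw [hw, Set.indicator_of_mem (show x ∈ {x | t / 2 < u x} from hx)]; exact le_self_add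
    · push_neg at hx; exact hx.trans le_add_self
  have hmx : ∀ α, mxF u α ≤ mxF w α + t / 2 := by
    intro α
    rw [mxF]
    refine iSup₂_le fun p hp => ?_
    have h1 : (∫⁻ x in Set.Ioo p.1 p.2, u x) ≤
        (∫⁻ x in Set.Ioo p.1 p.2, w x) + t / 2 * ENNReal.ofReal (p.2 - p.1) := by
      calc (∫⁻ x in Set.Ioo p.1 p.2, u x) ≤ ∫⁻ x in Set.Ioo p.1 p.2, (w x + t / 2) :=
            lintegral_mono hle
        _ = (∫⁻ x in Set.Ioo p.1 p.2, w x) + t / 2 * ENNReal.ofReal (p.2 - p.1) := by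
            rw [lintegral_add_right _ measurable_const, lintegral_const,
              Measure.restrict_apply_univ, Real.volume_Ioo]
    calc (∫⁻ x in Set.Ioo p.1 p.2, u x) / ENNReal.ofReal (p.2 - p.1)
        ≤ ((∫⁻ x in Set.Ioo p.1 p.2, w x) + t / 2 * ENNReal.ofReal (p.2 - p.1)) /
            ENNReal.ofReal (p.2 - p.1) := by gcongr
      _ = (∫⁻ x in Set.Ioo p.1 p.2, w x) / ENNReal.ofReal (p.2 - p.1) +
            t / 2 * ENNReal.ofReal (p.2 - p.1) / ENNReal.ofReal (p.2 - p.1) := by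
          rw [ENNReal.add_div]
      _ ≤ mxF w α + t / 2 := by
          refine add_le_add (avg_le_mxF w hp) ?_
          rw [mul_div_assoc]
          exact mul_le_of_le_one_right' ENNReal.div_self_le_one
  have hsub : {α | t < mxF u α} ⊆ {α | t / 2 < mxF w α} := by
    intro α hα
    by_contra hc
    simp only [Set.mem_setOf_eq, not_lt] at hc
    have : mxF u α ≤ t := by
      calc mxF u α ≤ mxF w α + t / 2 := hmx α
        _ ≤ t / 2 + t / 2 := by gcongr
        _ = t := ENNReal.add_halves t
    exact (not_lt.2 this) hα
  have h2 : t / 2 ≠ 0 := by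
    simp [ENNReal.div_eq_zero_iff, ht0]
  have h2' : t / 2 ≠ ∞ := by
    simp [ENNReal.div_eq_top, ht]
  calc t * volume {α | t < mxF u α}
      = 2 * (t / 2 * volume {α | t < mxF u α}) := by
        rw [← mul_assoc, ENNReal.mul_div_cancel' (by norm_num) (by norm_num)]
    _ ≤ 2 * (t / 2 * volume {α | t / 2 < mxF w α}) :=
        mul_le_mul_right (mul_le_mul_right (measure_mono hsub) _) _
    _ ≤ 2 * (4 * ∫⁻ x, w x) := mul_le_mul_right (weak_mxF w hu h2 h2') _
    _ = 8 * ∫⁻ x, w x := by rw [← mul_assoc]; norm_num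



/-- Layer-cake assembly: L² bound for a function dominated by twice the maximal function. -/
lemma layercake_bound (h : ℝ → ℝ) (hmeas : Measurable h) (hnn : ∀ x, 0 ≤ h x)
    (hL2 : ∫⁻ x, ENNReal.ofReal (h x ^ 2) ≠ ∞)
    (g : ℝ → ℝ) (gmeas : Measurable g) (gnn : ∀ α, 0 ≤ g α)
    (hg : ∀ α, ENNReal.ofReal (g α) ≤ 2 * mxF (fun x => ENNReal.ofReal (h x)) α) :
    ∫⁻ α, ENNReal.ofReal (g α ^ 2) ≤ 128 * ∫⁻ x, ENNReal.ofReal (h x ^ 2) := by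
  set u : ℝ → ℝ≥0∞ := fun x => ENNReal.ofReal (h x) with hu
  have umeas : Measurable u := ENNReal.measurable_ofReal.comp hmeas
  have husq : ∀ x, ENNReal.ofReal (h x ^ 2) = u x * u x := by
    intro x
    rw [hu, ← ENNReal.ofReal_mul (hnn x)]
    congr 1; ring
  set W : ℝ → ℝ → ℝ≥0∞ := fun τ x =>
    if ENNReal.ofReal τ < 4 * u x then u x else 0 with hW
  have Wind : (fun q : ℝ × ℝ => W q.1 q.2)
      = Set.indicator {q : ℝ × ℝ | ENNReal.ofReal q.1 < 4 * u q.2} (fun q => u q.2) := by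
    funext q; rw [Set.indicator_apply]; rfl
  have Wmeas : Measurable (fun q : ℝ × ℝ => W q.1 q.2) := by
    rw [Wind]
    exact (umeas.comp measurable_snd).indicator
      (measurableSet_lt (ENNReal.measurable_ofReal.comp measurable_fst)
        ((umeas.comp measurable_snd).const_mul 4))
  -- truncation finiteness
  have htrunc : ∀ τ : ℝ, 0 < τ → ∫⁻ x, W τ x ≠ ∞ := by
    intro τ hτ
    have ht'0 : ENNReal.ofReal τ / 4 ≠ 0 := by
      simp [ENNReal.div_eq_zero_iff, ENNReal.ofReal_eq_zero, not_le, hτ]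
    have hble : ∀ x, W τ x ≤ (ENNReal.ofReal τ / 4)⁻¹ * ENNReal.ofReal (h x ^ 2) := by
      intro x
      show (if ENNReal.ofReal τ < 4 * u x then u x else 0)
        ≤ (ENNReal.ofReal τ / 4)⁻¹ * ENNReal.ofReal (h x ^ 2)
      split_ifs with hx
      · have hlt : ENNReal.ofReal τ / 4 < u x :=
          (ENNReal.div_lt_iff (by norm_num) (by norm_num)).2 (by rwa [mul_comm] at hx)
        calc u x = ((ENNReal.ofReal τ / 4)⁻¹ * (ENNReal.ofReal τ / 4)) * u x := by
              rw [ENNReal.inv_mul_cancel ht'0 (by simp [ENNReal.div_eq_top]), one_mul]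
          _ ≤ (ENNReal.ofReal τ / 4)⁻¹ * ENNReal.ofReal (h x ^ 2) := by
              rw [husq x, mul_assoc]
              exact mul_le_mul_right (mul_le_mul_left hlt.le _) _
      · exact zero_le
    refine ne_top_of_le_ne_top ?_ (lintegral_mono hble)
    rw [lintegral_const_mul' _ _ (by simp [ht'0])]
    exact ENNReal.mul_ne_top (by simp [ht'0]) hL2
  -- main pointwise bound for the tail measure
  have tail : ∀ τ : ℝ, 0 < τ →
      volume {α | τ < g α} * ENNReal.ofReal (2 * τ) ≤ 32 * ∫⁻ x, W τ x := by
    intro τ hτ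
    set t : ℝ≥0∞ := ENNReal.ofReal τ / 2 with htdef
    have ht0 : t ≠ 0 := by
      simp [htdef, ENNReal.div_eq_zero_iff, ENNReal.ofReal_eq_zero, not_le, hτ]
    have httop : t ≠ ∞ := by simp [htdef, ENNReal.div_eq_top]
    have hcond : ∀ x, t / 2 < u x ↔ ENNReal.ofReal τ < 4 * u x := by
      intro x
      rw [htdef, ENNReal.div_lt_iff (Or.inl two_ne_zero) (Or.inl ENNReal.ofNat_ne_top),
        ENNReal.div_lt_iff (Or.inl two_ne_zero) (Or.inl ENNReal.ofNat_ne_top)]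
      constructor
      · intro h'; calc ENNReal.ofReal τ < u x * 2 * 2 := h'
          _ = 4 * u x := by ring
      · intro h'; calc ENNReal.ofReal τ < 4 * u x := h'
          _ = u x * 2 * 2 := by ring
    have hWrw : {x | t / 2 < u x}.indicator u = W τ := by
      funext x
      rw [Set.indicator_apply]
      show _ = (if ENNReal.ofReal τ < 4 * u x then u x else 0)
      exact if_congr (hcond x) rfl rfl
    have hsub : {α | τ < g α} ⊆ {α | t < mxF u α} := by
      intro α hα
      have h1 : ENNReal.ofReal τ < ENNReal.ofReal (g α) :=
        (ENNReal.ofReal_lt_ofReal_iff (lt_of_le_of_lt hτ.le hα)).2 hα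
      have h2 : ENNReal.ofReal τ < 2 * mxF u α := h1.trans_le (hg α)
      rw [Set.mem_setOf_eq, htdef, ENNReal.div_lt_iff (by norm_num) (by norm_num)]
      rwa [mul_comm] at h2
    have hweak := trunc_mxF u ht0 httop (by rw [hWrw]; exact htrunc τ hτ)
    rw [hWrw] at hweak
    have e1 : ENNReal.ofReal (2 * τ) = 4 * t := by
      rw [htdef, ENNReal.ofReal_mul (by norm_num : (0:ℝ) ≤ 2), ENNReal.ofReal_ofNat,
        show (4:ℝ≥0∞) = 2 * 2 by norm_num, mul_assoc,
        ENNReal.mul_div_cancel two_ne_zero (by norm_num)]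
    calc volume {α | τ < g α} * ENNReal.ofReal (2 * τ)
        = 4 * (t * volume {α | τ < g α}) := by rw [e1]; ring
      _ ≤ 4 * (t * volume {α | t < mxF u α}) :=
          mul_le_mul_right (mul_le_mul_right (measure_mono hsub) _) _
      _ ≤ 4 * (8 * ∫⁻ x, W τ x) := mul_le_mul_right hweak _
      _ = 32 * ∫⁻ x, W τ x := by rw [← mul_assoc]; norm_num
  -- layer cake
  have gsq : ∀ α, ENNReal.ofReal (g α ^ 2) = ENNReal.ofReal (∫ τ in (0:ℝ)..(g α), 2 * τ) := by
    intro α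
    congr 1
    rw [intervalIntegral.integral_const_mul, integral_id]
    ring
  have WmeasInt : Measurable fun τ => ∫⁻ x, W τ x :=
    Measurable.lintegral_prod_right' Wmeas
  have inner : ∀ x, (∫⁻ τ in Set.Ioi (0:ℝ), W τ x) = 4 * ENNReal.ofReal (h x ^ 2) := by
    intro x
    have hWx : (fun τ => W τ x) = {τ : ℝ | ENNReal.ofReal τ < 4 * u x}.indicator
        (fun _ => u x) := by
      funext τ
      rw [Set.indicator_apply]
      exact if_congr Iff.rfl rfl rfl
    have hsetmeas : MeasurableSet {τ : ℝ | ENNReal.ofReal τ < 4 * u x} :=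
      measurableSet_lt ENNReal.measurable_ofReal measurable_const
    rw [hWx, lintegral_indicator hsetmeas, setLIntegral_const,
      Measure.restrict_apply hsetmeas]
    have hset : {τ : ℝ | ENNReal.ofReal τ < 4 * u x} ∩ Set.Ioi 0 = Set.Ioo 0 (4 * h x) := by
      ext τ
      simp only [Set.mem_inter_iff, Set.mem_setOf_eq, Set.mem_Ioi, Set.mem_Ioo]
      constructor
      · rintro ⟨h1, h2⟩
        refine ⟨h2, ?_⟩
        rw [hu] at h1
        rw [← ENNReal.ofReal_ofNat, ← ENNReal.ofReal_mul (by norm_num : (0:ℝ) ≤ 4)] at h1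
        exact (ENNReal.ofReal_lt_ofReal_iff_of_nonneg h2.le).1 h1
      · rintro ⟨h2, h1⟩
        refine ⟨?_, h2⟩
        rw [hu, ← ENNReal.ofReal_ofNat, ← ENNReal.ofReal_mul (by norm_num : (0:ℝ) ≤ 4)]
        exact (ENNReal.ofReal_lt_ofReal_iff_of_nonneg h2.le).2 h1
    rw [hset, Real.volume_Ioo, sub_zero, ENNReal.ofReal_mul (by norm_num : (0:ℝ) ≤ 4),
      ENNReal.ofReal_ofNat, husq x]
    rw [hu]
    ring
  calc ∫⁻ α, ENNReal.ofReal (g α ^ 2)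
      = ∫⁻ α, ENNReal.ofReal (∫ τ in (0:ℝ)..(g α), 2 * τ) := by simp_rw [gsq]
    _ = ∫⁻ τ in Set.Ioi (0:ℝ), volume {α | τ < g α} * ENNReal.ofReal (2 * τ) := by
        refine lintegral_comp_eq_lintegral_meas_lt_mul volume (ae_of_all _ gnn)
          gmeas.aemeasurable (fun t _ => (continuous_const.mul continuous_id).intervalIntegrable _ _) ?_
        filter_upwards [ae_restrict_mem measurableSet_Ioi] with τ hτ
        have : (0:ℝ) < τ := hτ
        linarith
    _ ≤ ∫⁻ τ in Set.Ioi (0:ℝ), 32 * ∫⁻ x, W τ x := by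
        refine setLIntegral_mono (WmeasInt.const_mul 32) fun τ hτ => tail τ hτ
    _ = 32 * ∫⁻ τ in Set.Ioi (0:ℝ), ∫⁻ x, W τ x := lintegral_const_mul 32 WmeasInt
    _ = 32 * ∫⁻ x, ∫⁻ τ in Set.Ioi (0:ℝ), W τ x := by
        rw [lintegral_lintegral_swap Wmeas.aemeasurable]
    _ = 32 * ∫⁻ x, 4 * ENNReal.ofReal (h x ^ 2) := by simp_rw [inner]
    _ = 128 * ∫⁻ x, ENNReal.ofReal (h x ^ 2) := by
        rw [lintegral_const_mul 4 ((hmeas.pow_const 2).ennreal_ofReal), ← mul_assoc]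
        norm_num



lemma quot_bound (f : SchwartzMap ℝ ℂ) {α β : ℝ} (hβ : β ≠ α) :
    ENNReal.ofReal ‖(f α - f β) / ((α - β : ℝ) : ℂ)‖
      ≤ 2 * mxF (fun x => ENNReal.ofReal ‖deriv (⇑f) x‖) α := by
  set u : ℝ → ℝ≥0∞ := fun x => ENNReal.ofReal ‖deriv (⇑f) x‖ with hu
  have hderiv : (⇑(SchwartzMap.derivCLM ℝ ℂ f)) = deriv (⇑f) :=
    funext fun x => SchwartzMap.derivCLM_apply ℝ f x
  have dc : Continuous (deriv (⇑f)) := hderiv ▸ (SchwartzMap.derivCLM ℝ ℂ f).continuous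
  set a := min α β with ha
  set b := max α β with hb
  have hab : a < b := min_lt_max.2 (Ne.symm hβ)
  have hmem : a ≤ α ∧ α ≤ b := ⟨min_le_left _ _, le_max_left _ _⟩
  have hL : (0:ℝ) < b - a := sub_pos.2 hab
  -- the norm of the quotient
  have habs : |α - β| = b - a := by rw [abs_sub_comm, ← max_sub_min_eq_abs]
  have hnorm : ‖(f α - f β) / ((α - β : ℝ) : ℂ)‖ = ‖f b - f a‖ / (b - a) := by
    rw [norm_div, Complex.norm_real, Real.norm_eq_abs, habs]
    congr 1
    rcases le_total α β with hc | hc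
    · rw [hb, ha, max_eq_right hc, min_eq_left hc, norm_sub_rev]
    · rw [hb, ha, max_eq_left hc, min_eq_right hc]
  -- FTC and norm bound
  have hftc : f b - f a = ∫ t in a..b, deriv (⇑f) t :=
    (intervalIntegral.integral_deriv_eq_sub (fun x _ => f.differentiableAt)
      (dc.intervalIntegrable a b)).symm
  have hnormint : ‖f b - f a‖ ≤ ∫ t in a..b, ‖deriv (⇑f) t‖ := by
    rw [hftc]
    exact intervalIntegral.norm_integral_le_integral_norm hab.le
  have hIoc : (∫ t in a..b, ‖deriv (⇑f) t‖) = ∫ t in Set.Ioc a b, ‖deriv (⇑f) t‖ :=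
    intervalIntegral.integral_of_le hab.le
  have hlint : ENNReal.ofReal (∫ t in Set.Ioc a b, ‖deriv (⇑f) t‖)
      = ∫⁻ t in Set.Ioc a b, u t :=
    ofReal_integral_eq_lintegral_ofReal (dc.norm.integrableOn_Ioc)
      (ae_of_all _ fun t => norm_nonneg _)
  have hioo : (∫⁻ t in Set.Ioc a b, u t) = ∫⁻ t in Set.Ioo a b, u t :=
    (setLIntegral_congr (Ioo_ae_eq_Ioc (a := a) (b := b))).symm
  -- the enlarged interval
  set p : ℝ × ℝ := (a - (b - a) / 2, b + (b - a) / 2) with hp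
  have hpmem : p.1 < α ∧ α < p.2 := by
    constructor
    · have : a - (b - a) / 2 < a := by linarith
      exact lt_of_lt_of_le this hmem.1
    · have : b < b + (b - a) / 2 := by linarith
      exact lt_of_le_of_lt hmem.2 this
  have hplen : p.2 - p.1 = 2 * (b - a) := by rw [hp]; ring
  calc ENNReal.ofReal ‖(f α - f β) / ((α - β : ℝ) : ℂ)‖
      = ENNReal.ofReal (‖f b - f a‖ / (b - a)) := by rw [hnorm]
    _ = ENNReal.ofReal ‖f b - f a‖ / ENNReal.ofReal (b - a) := ENNReal.ofReal_div_of_pos hL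
    _ ≤ (∫⁻ t in Set.Ioo a b, u t) / ENNReal.ofReal (b - a) := by
        gcongr
        rw [← hioo, ← hlint]
        exact ENNReal.ofReal_le_ofReal (hnormint.trans_eq hIoc)
    _ = 2 * ((∫⁻ t in Set.Ioo a b, u t) / ENNReal.ofReal (2 * (b - a))) := by
        rw [ENNReal.ofReal_mul (by norm_num : (0:ℝ) ≤ 2), ENNReal.ofReal_ofNat,
          ← mul_div_assoc, ENNReal.mul_div_mul_left _ _ two_ne_zero ENNReal.ofNat_ne_top]
    _ ≤ 2 * ((∫⁻ t in Set.Ioo p.1 p.2, u t) / ENNReal.ofReal (p.2 - p.1)) := by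
        gcongr
        · show _ ≤ _; simp only [hp]; linarith
        · show _ ≤ _; simp only [hp]; linarith
        · rw [hplen]
    _ ≤ 2 * mxF u α := mul_le_mul_right (avg_le_mxF u hpmem) _

end MaximalFunction

section Main
open Set ENNReal

/-- For Schwartz `f`, the maximal difference-quotient function
`α ↦ sup_{β ≠ α} |(f(α) − f(β))/(α − β)|` is in `L²(ℝ)` with norm `≲ ‖f'‖_{L²}`. -/
theorem maximal_difference_quotient_L2 :
    ∃ C : ℝ, 0 < C ∧ ∀ f : SchwartzMap ℝ ℂ,
      MemLp (fun α : ℝ =>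
          ⨆ β : {b : ℝ // b ≠ α}, ‖(f α - f (β : ℝ)) / (((α - (β : ℝ) : ℝ)) : ℂ)‖) 2 volume ∧
      Real.sqrt (∫ α : ℝ,
          (⨆ β : {b : ℝ // b ≠ α}, ‖(f α - f (β : ℝ)) / (((α - (β : ℝ) : ℝ)) : ℂ)‖) ^ 2)
        ≤ C * Real.sqrt (∫ x : ℝ, ‖deriv (⇑f) x‖ ^ 2) := by
  refine ⟨12, by norm_num, fun f => ?_⟩
  set g : ℝ → ℝ := fun α =>
    ⨆ β : {b : ℝ // b ≠ α}, ‖(f α - f (β : ℝ)) / (((α - (β : ℝ) : ℝ)) : ℂ)‖ with hgdef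
  set h : ℝ → ℝ := fun x => ‖deriv (⇑f) x‖ with hhdef
  have hderiv : (⇑(SchwartzMap.derivCLM ℝ ℂ f)) = deriv (⇑f) :=
    funext fun x => SchwartzMap.derivCLM_apply ℝ f x
  have dc : Continuous (deriv (⇑f)) := hderiv ▸ (SchwartzMap.derivCLM ℝ ℂ f).continuous
  have hmeas : Measurable h := dc.norm.measurable
  have hnn : ∀ x, 0 ≤ h x := fun x => norm_nonneg _
  -- a Lipschitz bound
  obtain ⟨L, hLpos, hL⟩ : ∃ L : ℝ, 0 < L ∧ ∀ x, ‖deriv (⇑f) x‖ ≤ L := by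
    refine ⟨(SchwartzMap.seminorm ℝ 0 0) (SchwartzMap.derivCLM ℝ ℂ f) + 1, ?_, fun x => ?_⟩
    · positivity
    · have := SchwartzMap.norm_le_seminorm ℝ (SchwartzMap.derivCLM ℝ ℂ f) x
      rw [hderiv] at this
      linarith
  have hlip : LipschitzWith (Real.toNNReal L) (⇑f) := by
    apply lipschitzWith_of_nnnorm_deriv_le f.differentiable
    intro x
    rw [← NNReal.coe_le_coe, coe_nnnorm, Real.coe_toNNReal _ hLpos.le]
    exact hL x
  -- each difference quotient is bounded by L
  have hquotbdd : ∀ α : ℝ, ∀ β : {b : ℝ // b ≠ α},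
      ‖(f α - f (β : ℝ)) / (((α - (β : ℝ) : ℝ)) : ℂ)‖ ≤ L := by
    intro α β
    rw [norm_div, Complex.norm_real, Real.norm_eq_abs]
    rcases eq_or_ne α (β : ℝ) with hc | hc
    · exact absurd hc.symm β.2
    have habs : (0:ℝ) < |α - (β : ℝ)| := abs_pos.2 (sub_ne_zero.2 hc)
    rw [div_le_iff₀ habs]
    have := hlip.dist_le_mul α (β : ℝ)
    rw [dist_eq_norm, Real.dist_eq, Real.coe_toNNReal _ hLpos.le] at this
    calc ‖f α - f (β : ℝ)‖ ≤ L * |α - (β : ℝ)| := this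
      _ = L * |α - (β : ℝ)| := rfl
  have hbdd : ∀ α : ℝ, BddAbove (Set.range fun β : {b : ℝ // b ≠ α} =>
      ‖(f α - f (β : ℝ)) / (((α - (β : ℝ) : ℝ)) : ℂ)‖) := by
    intro α
    exact ⟨L, by rintro y ⟨β, rfl⟩; exact hquotbdd α β⟩
  have hne : ∀ α : ℝ, Nonempty {b : ℝ // b ≠ α} := fun α => ⟨⟨α + 1, by simp⟩⟩
  have gnn : ∀ α, 0 ≤ g α := fun α => Real.iSup_nonneg fun β => norm_nonneg _
  -- g is lower semicontinuous, hence measurable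
  have hopen : ∀ τ : ℝ, IsOpen {α | τ < g α} := by
    intro τ
    rw [isOpen_iff_mem_nhds]
    intro α hα
    haveI := hne α
    obtain ⟨β, hβ⟩ := (lt_ciSup_iff (hbdd α)).1 (show τ < g α from hα)
    have hαβ : α ≠ (β : ℝ) := fun hc => β.2 hc.symm
    have hcont : ContinuousAt (fun x : ℝ => ‖(f x - f (β : ℝ)) / (((x - (β : ℝ) : ℝ)) : ℂ)‖) α := by
      apply ContinuousAt.norm
      apply ContinuousAt.div
      · exact (f.continuous.sub continuous_const).continuousAt
      · exact (Complex.continuous_ofReal.comp (continuous_id.sub continuous_const)).continuousAt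
      · simpa [Complex.ofReal_eq_zero, sub_ne_zero] using hαβ
    have hev1 : ∀ᶠ x in nhds α, τ < ‖(f x - f (β : ℝ)) / (((x - (β : ℝ) : ℝ)) : ℂ)‖ :=
      hcont (Ioi_mem_nhds hβ)
    have hev2 : ∀ᶠ x in nhds α, x ≠ (β : ℝ) := eventually_ne_nhds hαβ
    filter_upwards [hev1, hev2] with x hx1 hx2
    haveI := hne x
    show τ < g x
    exact lt_of_lt_of_le hx1 (le_ciSup (hbdd x) ⟨(β : ℝ), hx2.symm⟩)
  have gmeas : Measurable g := measurable_of_Ioi fun τ => (hopen τ).measurableSet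
  -- pointwise domination
  have hgdom : ∀ α, ENNReal.ofReal (g α) ≤ 2 * mxF (fun x => ENNReal.ofReal (h x)) α := by
    intro α
    by_cases hM : 2 * mxF (fun x => ENNReal.ofReal (h x)) α = ∞
    · rw [hM]; exact le_top
    rw [ENNReal.ofReal_le_iff_le_toReal hM]
    haveI := hne α
    refine ciSup_le fun β => ?_
    rw [← ENNReal.ofReal_le_iff_le_toReal hM]
    exact quot_bound f β.2
  -- L² finiteness of h
  have hI : Integrable (fun x => h x ^ 2) volume := by
    have h1 : Integrable (fun x => L * ‖(SchwartzMap.derivCLM ℝ ℂ f) x‖) volume :=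
      ((SchwartzMap.derivCLM ℝ ℂ f).integrable (μ := volume)).norm.const_mul L
    refine h1.mono' (((dc.norm.pow 2)).aestronglyMeasurable) (ae_of_all _ fun x => ?_)
    rw [hderiv, Real.norm_of_nonneg (by positivity : (0:ℝ) ≤ h x ^ 2)]
    calc h x ^ 2 = h x * h x := sq (h x) ▸ by ring
      _ ≤ L * h x := mul_le_mul_of_nonneg_right (hL x) (hnn x)
  have hL2fin : ∫⁻ x, ENNReal.ofReal (h x ^ 2) ≠ ∞ := by
    have h2 := hI.hasFiniteIntegral
    rw [HasFiniteIntegral] at h2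
    have : ∀ x, ENNReal.ofReal (h x ^ 2) = (‖h x ^ 2‖₊ : ℝ≥0∞) := fun x => by
      rw [← enorm_eq_nnnorm, ← ofReal_norm, Real.norm_of_nonneg (by positivity : (0:ℝ) ≤ h x ^ 2)]
    simp_rw [this]
    exact h2.ne
  have key := layercake_bound h hmeas hnn hL2fin g gmeas gnn hgdom
  constructor
  · refine ⟨gmeas.aestronglyMeasurable, ?_⟩
    rw [eLpNorm_eq_lintegral_rpow_enorm_toReal two_ne_zero ENNReal.ofNat_ne_top]
    refine ENNReal.rpow_lt_top_of_nonneg (by positivity) ?_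
    have hgrw : ∀ a : ℝ, ((‖g a‖₊ : ℝ≥0∞)) ^ ((2:ℝ≥0∞).toReal) = ENNReal.ofReal (g a ^ 2) := by
      intro a
      rw [show ((2:ℝ≥0∞)).toReal = ((2:ℕ):ℝ) by norm_num, ENNReal.rpow_natCast,
        ← enorm_eq_nnnorm, ← ofReal_norm, Real.norm_of_nonneg (gnn a),
        ← ENNReal.ofReal_pow (gnn a)]
    simp_rw [enorm_eq_nnnorm, hgrw]
    exact (key.trans_lt (ENNReal.mul_lt_top (by norm_num) hL2fin.lt_top)).ne
  · have e_g : ∫ α, g α ^ 2 = (∫⁻ α, ENNReal.ofReal (g α ^ 2)).toReal :=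
      integral_eq_lintegral_of_nonneg_ae (ae_of_all _ fun α => sq_nonneg _)
        ((gmeas.pow_const 2).aestronglyMeasurable)
    have e_h : ∫ x, h x ^ 2 = (∫⁻ x, ENNReal.ofReal (h x ^ 2)).toReal :=
      integral_eq_lintegral_of_nonneg_ae (ae_of_all _ fun x => sq_nonneg _)
        ((dc.norm.pow 2).aestronglyMeasurable)
    rw [show (fun α : ℝ => ⨆ β : {b : ℝ // b ≠ α},
        ‖(f α - f (β : ℝ)) / (((α - (β : ℝ) : ℝ)) : ℂ)‖) = g from rfl] at *
    rw [e_g, e_h]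
    have htoReal : (∫⁻ α, ENNReal.ofReal (g α ^ 2)).toReal
        ≤ 128 * (∫⁻ x, ENNReal.ofReal (h x ^ 2)).toReal := by
      calc (∫⁻ α, ENNReal.ofReal (g α ^ 2)).toReal
          ≤ ((128 : ℝ≥0∞) * ∫⁻ x, ENNReal.ofReal (h x ^ 2)).toReal :=
            ENNReal.toReal_mono (ENNReal.mul_ne_top (by norm_num) hL2fin) key
        _ = 128 * (∫⁻ x, ENNReal.ofReal (h x ^ 2)).toReal := by
            rw [ENNReal.toReal_mul]
            norm_num
    have hsqrt128 : Real.sqrt 128 ≤ 12 := by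
      have h144 : Real.sqrt 144 = 12 := by
        rw [show (144:ℝ) = 12 ^ 2 by norm_num, Real.sqrt_sq (by norm_num : (0:ℝ) ≤ 12)]
      calc Real.sqrt 128 ≤ Real.sqrt 144 := Real.sqrt_le_sqrt (by norm_num)
        _ = 12 := h144
    calc Real.sqrt (∫⁻ α, ENNReal.ofReal (g α ^ 2)).toReal
        ≤ Real.sqrt (128 * (∫⁻ x, ENNReal.ofReal (h x ^ 2)).toReal) :=
          Real.sqrt_le_sqrt htoReal
      _ = Real.sqrt 128 * Real.sqrt (∫⁻ x, ENNReal.ofReal (h x ^ 2)).toReal :=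
          Real.sqrt_mul (by norm_num) _
      _ ≤ 12 * Real.sqrt (∫⁻ x, ENNReal.ofReal (h x ^ 2)).toReal :=
          mul_le_mul_of_nonneg_right hsqrt128 (Real.sqrt_nonneg _)

end Main
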